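/- For every r > 0, the K-function estimator with plugged-in estimated intensity is consistent: K̂_{n,β̂_n}(r) → K(r) in probability as n → ∞. -/

import Mathlib

open MeasureTheory Filter Topology ENNReal

noncomputable section

namespace KFunCLT

/-- Points of `ℝ^d`. -/
abbrev Pt (d : ℕ) := EuclideanSpace ℝ (Fin d)

/-- The observation window `W_n = [-n^{1/d}/2, n^{1/d}/2]^d` of volume `n`. -/
def Wn (d n : ℕ) : Set (Pt d) :=
  {x | ∀ i, |x i| ≤ (n : ℝ) ^ ((1 : ℝ) / (d : ℝ)) / 2}

/-- The window `W_n` translated by `v`. -/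
def WnT (d n : ℕ) (v : Pt d) : Set (Pt d) := (fun x => x + v) '' Wn d n

/-- The edge correction factor `e_n(x,y) = |W_n ∩ W_{n,x-y}|⁻¹`. -/
def en (d n : ℕ) (x y : Pt d) : ℝ :=
  ((volume (Wn d n ∩ WnT d n (x - y))).toReal)⁻¹

/-- Pairs of distinct points of a set. -/
def pairs {α : Type*} (A : Set α) : Set (α × α) :=
  {q | q.1 ∈ A ∧ q.2 ∈ A ∧ q.1 ≠ q.2}

/-- Triples of pairwise distinct points of a set. -/
def triples {α : Type*} (A : Set α) : Set (α × α × α) :=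
  {q | q.1 ∈ A ∧ q.2.1 ∈ A ∧ q.2.2 ∈ A ∧ q.1 ≠ q.2.1 ∧ q.1 ≠ q.2.2 ∧ q.2.1 ≠ q.2.2}

/-- Quadruples of pairwise distinct points of a set. -/
def quads {α : Type*} (A : Set α) : Set (α × α × α × α) :=
  {q | q.1 ∈ A ∧ q.2.1 ∈ A ∧ q.2.2.1 ∈ A ∧ q.2.2.2 ∈ A ∧
    q.1 ≠ q.2.1 ∧ q.1 ≠ q.2.2.1 ∧ q.1 ≠ q.2.2.2 ∧
    q.2.1 ≠ q.2.2.1 ∧ q.2.1 ≠ q.2.2.2 ∧ q.2.2.1 ≠ q.2.2.2}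

/-- Sum of `f(x,y)` over pairs of distinct points `x ≠ y` of `A`. -/
def pairSum {α F : Type*} [AddCommMonoid F] [TopologicalSpace F]
    (A : Set α) (f : α → α → F) : F :=
  ∑' q : pairs A, f q.val.1 q.val.2

/-- The estimator `K̂_{n,β}(r)` of the `K`-function, using intensity parameter `β`. -/
def Khat {Ω : Type*} {d p : ℕ} (P : Ω → Set (Pt d))
    (ρ : EuclideanSpace ℝ (Fin p) → Pt d → ℝ)
    (n : ℕ) (b : EuclideanSpace ℝ (Fin p)) (r : ℝ) (ω : Ω) : ℝ :=
  pairSum (P ω ∩ Wn d n) fun x y =>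
    if ‖x - y‖ ≤ r then en d n x y / (ρ b x * ρ b y) else 0

/-- The vector `H_{n,β}(r) ∈ ℝ^p`, i.e. minus the sum over pairs of distinct points of
`P ∩ W_n` at distance at most `r` of `e_n(x,y) ∇_β log(ρ_β(x)ρ_β(y)) / (ρ_β(x)ρ_β(y))`. -/
def Hfun {Ω : Type*} {d p : ℕ} (P : Ω → Set (Pt d))
    (ρ : EuclideanSpace ℝ (Fin p) → Pt d → ℝ)
    (n : ℕ) (b : EuclideanSpace ℝ (Fin p)) (r : ℝ) (ω : Ω) :
    EuclideanSpace ℝ (Fin p) :=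
  - pairSum (P ω ∩ Wn d n) fun x y =>
      if ‖x - y‖ ≤ r then
        (en d n x y / (ρ b x * ρ b y)) •
          gradient (fun b' => Real.log (ρ b' x * ρ b' y)) b
      else (0 : EuclideanSpace ℝ (Fin p))

/-- Assumption (R): uniform bounds on `ρ_β` and its first two derivatives in `β`,
for `β` in a neighbourhood of the true parameter `β*`. -/
def AssumptionR {d p : ℕ} (ρ : EuclideanSpace ℝ (Fin p) → Pt d → ℝ)
    (βs : EuclideanSpace ℝ (Fin p)) : Prop :=
  ∃ ε > (0 : ℝ), ∃ c₁ c₂ c₃ c₄ : ℝ, 0 < c₁ ∧ 0 < c₂ ∧ 0 < c₃ ∧ 0 < c₄ ∧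
    ∀ b : EuclideanSpace ℝ (Fin p), ‖b - βs‖ ≤ ε → ∀ x : Pt d,
      c₁ < ρ b x ∧ ρ b x < c₂ ∧
      ‖fderiv ℝ (fun b' => ρ b' x) b‖ < c₃ ∧
      ‖fderiv ℝ (fun b' => fderiv ℝ (fun b'' => ρ b'' x) b') b‖ < c₄

end KFunCLT

open KFunCLT

section Aux

open Metric Bornology

lemma isCompact_Wn_aux (d n : ℕ) : IsCompact (Wn d n) := by
  apply Metric.isCompact_of_isClosed_isBounded
  · have h : Wn d n = ⋂ i, {x : Pt d | |x i| ≤ (n : ℝ) ^ ((1 : ℝ) / (d : ℝ)) / 2} := by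
      ext x; simp [Wn, Set.mem_iInter]
    rw [h]
    exact isClosed_iInter fun i =>
      isClosed_le (continuous_abs.comp (EuclideanSpace.proj (𝕜 := ℝ) i).continuous)
        continuous_const
  · rw [isBounded_iff_forall_norm_le]
    set a : ℝ := (n : ℝ) ^ ((1 : ℝ) / (d : ℝ)) / 2 with ha
    refine ⟨Real.sqrt (d * a ^ 2), fun x hx => ?_⟩
    rw [EuclideanSpace.norm_eq]
    apply Real.sqrt_le_sqrt
    calc ∑ i, ‖x i‖ ^ 2 ≤ ∑ _i : Fin d, a ^ 2 := by
          refine Finset.sum_le_sum fun i _ => ?_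
          rw [Real.norm_eq_abs]
          exact pow_le_pow_left₀ (abs_nonneg _) (hx i) 2
      _ = d * a ^ 2 := by
          simp [Finset.sum_const, nsmul_eq_mul]

end Aux

/-- `K̂_{n,β̂_n}(r) → K(r)` in probability, for every `r > 0`. -/
theorem statement3
    {d p : ℕ} (hd : 1 ≤ d)
    {Ω : Type*} [MeasurableSpace Ω] (μ : Measure Ω) [IsProbabilityMeasure μ]
    (P : Ω → Set (Pt d))
    (hPloc : ∀ ω, ∀ K : Set (Pt d), IsCompact K → (P ω ∩ K).Finite)
    (ρ : EuclideanSpace ℝ (Fin p) → Pt d → ℝ) (βs : EuclideanSpace ℝ (Fin p))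
    (hρpos : ∀ b x, 0 < ρ b x)
    (hρC2 : ∀ x, ContDiff ℝ 2 fun b => ρ b x)
    (hR : AssumptionR ρ βs)
    -- normalized joint intensities and Campbell formulae
    (g : Pt d → ℝ) (hgmeas : Measurable g) (hg0 : ∀ x, 0 ≤ g x)
    (g3 : Pt d → Pt d → Pt d → ℝ)
    (hg3meas : Measurable fun q : Pt d × Pt d × Pt d => g3 q.1 q.2.1 q.2.2)
    (hg3ti : ∀ v x y z : Pt d, g3 (x + v) (y + v) (z + v) = g3 x y z)
    (g4 : Pt d → Pt d → Pt d → Pt d → ℝ)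
    (hg4meas : Measurable fun q : Pt d × Pt d × Pt d × Pt d =>
      g4 q.1 q.2.1 q.2.2.1 q.2.2.2)
    (hg4ti : ∀ v x y z w : Pt d, g4 (x + v) (y + v) (z + v) (w + v) = g4 x y z w)
    (hC2 : ∀ f : Pt d → Pt d → ℝ≥0∞, Measurable (Function.uncurry f) →
      ∫⁻ ω, ∑' q : pairs (P ω), f q.val.1 q.val.2 ∂μ
        = ∫⁻ x, ∫⁻ y, f x y * ENNReal.ofReal (ρ βs x * ρ βs y * g (x - y)))
    (hC3 : ∀ f : Pt d → Pt d → Pt d → ℝ≥0∞,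
      Measurable (fun q : Pt d × Pt d × Pt d => f q.1 q.2.1 q.2.2) →
      ∫⁻ ω, ∑' q : triples (P ω), f q.val.1 q.val.2.1 q.val.2.2 ∂μ
        = ∫⁻ x, ∫⁻ y, ∫⁻ z, f x y z *
            ENNReal.ofReal (ρ βs x * ρ βs y * ρ βs z * g3 x y z))
    (hC4 : ∀ f : Pt d → Pt d → Pt d → Pt d → ℝ≥0∞,
      Measurable (fun q : Pt d × Pt d × Pt d × Pt d => f q.1 q.2.1 q.2.2.1 q.2.2.2) →
      ∫⁻ ω, ∑' q : quads (P ω), f q.val.1 q.val.2.1 q.val.2.2.1 q.val.2.2.2 ∂μ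
        = ∫⁻ x, ∫⁻ y, ∫⁻ z, ∫⁻ w, f x y z w *
            ENNReal.ofReal (ρ βs x * ρ βs y * ρ βs z * ρ βs w * g4 x y z w))
    -- boundedness assumption (B)
    (hB : ∃ M : ℝ, (∀ x, |g x| ≤ M) ∧ (∀ x y z, |g3 x y z| ≤ M) ∧
      (∀ x y z w, |g4 x y z w| ≤ M))
    -- decay assumption (D)
    (hD1 : ∫⁻ h, ENNReal.ofReal |g h - 1| < ⊤)
    (hD2 : (⨆ x : Pt d, ∫⁻ z, ENNReal.ofReal |g3 0 x z - g x|) < ⊤)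
    (hD3 : (⨆ u₁ : Pt d, ⨆ u₂ : Pt d,
        ∫⁻ u₄, ENNReal.ofReal |g4 0 u₁ u₄ (u₂ + u₄) - g u₁ * g u₂|) < ⊤)
    -- assumption (C): consistency of the intensity estimate and of `K̂_n` with
    -- known intensity, where `K(r) = ∫_{B_r(0)} g(h) dh`
    (βhat : ℕ → Ω → EuclideanSpace ℝ (Fin p))
    (hβcons : TendstoInMeasure μ βhat atTop fun _ => βs)
    (hKcons : ∀ r : ℝ, 0 < r →
      TendstoInMeasure μ (fun n ω => Khat P ρ n βs r ω) atTop
        fun _ => ∫ h in Metric.ball (0 : Pt d) r, g h) :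
    ∀ r : ℝ, 0 < r →
      TendstoInMeasure μ (fun n ω => Khat P ρ n (βhat n ω) r ω) atTop
        fun _ => ∫ h in Metric.ball (0 : Pt d) r, g h := by

  obtain ⟨εR, hεR, c₁, c₂, c₃, c₄, hc₁, hc₂, hc₃, hc₄, hRb⟩ := hR
  have hen : ∀ (n : ℕ) (x y : Pt d), 0 ≤ en d n x y :=
    fun n x y => inv_nonneg.2 ENNReal.toReal_nonneg
  set L : ℝ := ((c₁ * c₁) * (c₁ * c₁))⁻¹ * (2 * (c₂ * c₃)) with hLdef
  have hLpos : 0 < L := by positivity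
  -- Lipschitz estimate for the inverse intensity product
  have hlip : ∀ (x y : Pt d) (b : EuclideanSpace ℝ (Fin p)), ‖b - βs‖ ≤ εR →
      |(ρ b x * ρ b y)⁻¹ - (ρ βs x * ρ βs y)⁻¹| ≤ L * ‖b - βs‖ := by
    intro x y b hb
    have hmem : ∀ b' : EuclideanSpace ℝ (Fin p), ‖b' - βs‖ ≤ εR →
        b' ∈ Metric.closedBall βs εR := fun b' h => by
      simpa [Metric.mem_closedBall, dist_eq_norm] using h
    have hdiffz : ∀ z : Pt d, Differentiable ℝ (fun b' => ρ b' z) :=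
      fun z => (hρC2 z).differentiable (by norm_num)
    have key := Convex.norm_image_sub_le_of_norm_hasFDerivWithin_le
      (f := fun b' => (ρ b' x * ρ b' y)⁻¹)
      (f' := fun b' => (-((ρ b' x * ρ b' y) ^ 2)⁻¹) •
        (ρ b' x • fderiv ℝ (fun b'' => ρ b'' y) b' +
         ρ b' y • fderiv ℝ (fun b'' => ρ b'' x) b'))
      (s := Metric.closedBall βs εR) (C := L) ?_ ?_ (convex_closedBall _ _)
      (hmem βs (by simp [hεR.le])) (hmem b hb)
    · rw [Real.norm_eq_abs] at key
      exact key
    · intro b' _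
      have hmd : HasFDerivAt (fun b'' => ρ b'' x * ρ b'' y)
          (ρ b' x • fderiv ℝ (fun b'' => ρ b'' y) b' +
           ρ b' y • fderiv ℝ (fun b'' => ρ b'' x) b') b' :=
        ((hdiffz x b').hasFDerivAt).mul ((hdiffz y b').hasFDerivAt)
      have hne : ρ b' x * ρ b' y ≠ 0 := (mul_pos (hρpos b' x) (hρpos b' y)).ne'
      have hcomp := (hasDerivAt_inv hne).comp_hasFDerivAt b' hmd
      exact hcomp.hasFDerivWithinAt
    · intro b' hb'
      have hmemb : ‖b' - βs‖ ≤ εR := by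
        simpa [Metric.mem_closedBall, dist_eq_norm] using hb'
      obtain ⟨h1x, h2x, h3x, -⟩ := hRb b' hmemb x
      obtain ⟨h1y, h2y, h3y, -⟩ := hRb b' hmemb y
      have hpx := hρpos b' x
      have hpy := hρpos b' y
      rw [norm_smul]
      have hDsum : ‖ρ b' x • fderiv ℝ (fun b'' => ρ b'' y) b' +
          ρ b' y • fderiv ℝ (fun b'' => ρ b'' x) b'‖ ≤ 2 * (c₂ * c₃) := by
        refine (norm_add_le _ _).trans ?_
        rw [norm_smul, norm_smul, Real.norm_eq_abs, Real.norm_eq_abs,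
          abs_of_pos hpx, abs_of_pos hpy]
        have e1 : ρ b' x * ‖fderiv ℝ (fun b'' => ρ b'' y) b'‖ ≤ c₂ * c₃ :=
          mul_le_mul h2x.le h3y.le (norm_nonneg _) hc₂.le
        have e2 : ρ b' y * ‖fderiv ℝ (fun b'' => ρ b'' x) b'‖ ≤ c₂ * c₃ :=
          mul_le_mul h2y.le h3x.le (norm_nonneg _) hc₂.le
        linarith
      have habs : ‖-(((ρ b' x * ρ b' y) ^ 2)⁻¹)‖ ≤ ((c₁ * c₁) * (c₁ * c₁))⁻¹ := by
        rw [norm_neg, Real.norm_eq_abs, abs_inv, abs_pow, abs_of_pos (mul_pos hpx hpy)]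
        have hcc : c₁ * c₁ < ρ b' x * ρ b' y := mul_lt_mul'' h1x h1y hc₁.le hc₁.le
        have h1 : (c₁ * c₁) * (c₁ * c₁) ≤ (ρ b' x * ρ b' y) ^ 2 := by
          nlinarith [hcc, mul_pos hc₁ hc₁]
        exact inv_anti₀ (by positivity) h1
      calc ‖-(((ρ b' x * ρ b' y) ^ 2)⁻¹)‖ *
            ‖ρ b' x • fderiv ℝ (fun b'' => ρ b'' y) b' +
              ρ b' y • fderiv ℝ (fun b'' => ρ b'' x) b'‖
          ≤ ((c₁ * c₁) * (c₁ * c₁))⁻¹ * (2 * (c₂ * c₃)) :=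
            mul_le_mul habs hDsum (norm_nonneg _) (by positivity)
        _ = L := hLdef.symm
  intro r hr
  -- nonnegativity of the K-estimator at the true parameter
  have hKnn : ∀ (n : ℕ) (ω : Ω), 0 ≤ Khat P ρ n βs r ω := by
    intro n ω
    unfold Khat pairSum
    refine tsum_nonneg fun q => ?_
    dsimp only
    split
    · exact div_nonneg (hen _ _ _) (mul_pos (hρpos _ _) (hρpos _ _)).le
    · exact le_rfl
  -- master Lipschitz-type inequality for the estimator
  have hmaster : ∀ (n : ℕ) (ω : Ω) (b : EuclideanSpace ℝ (Fin p)), ‖b - βs‖ ≤ εR →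
      |Khat P ρ n b r ω - Khat P ρ n βs r ω| ≤
        (L * (c₂ * c₂)) * (‖b - βs‖ * Khat P ρ n βs r ω) := by
    intro n ω b hb
    have hfinS : (P ω ∩ Wn d n).Finite := hPloc ω _ (isCompact_Wn_aux d n)
    have hfinP : (pairs (P ω ∩ Wn d n)).Finite :=
      (hfinS.prod hfinS).subset fun q hq => ⟨hq.1, hq.2.1⟩
    haveI : Fintype ↥(pairs (P ω ∩ Wn d n)) := hfinP.fintype
    have hβsball : ‖βs - βs‖ ≤ εR := by simp [hεR.le]
    unfold Khat pairSum
    rw [tsum_fintype, tsum_fintype]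
    have hper : ∀ q : ↥(pairs (P ω ∩ Wn d n)),
        |(if ‖(q : (Pt d) × (Pt d)).1 - (q : (Pt d) × (Pt d)).2‖ ≤ r then
            en d n (q : (Pt d) × (Pt d)).1 (q : (Pt d) × (Pt d)).2 /
              (ρ b (q : (Pt d) × (Pt d)).1 * ρ b (q : (Pt d) × (Pt d)).2) else 0) -
          (if ‖(q : (Pt d) × (Pt d)).1 - (q : (Pt d) × (Pt d)).2‖ ≤ r then
            en d n (q : (Pt d) × (Pt d)).1 (q : (Pt d) × (Pt d)).2 /
              (ρ βs (q : (Pt d) × (Pt d)).1 * ρ βs (q : (Pt d) × (Pt d)).2) else 0)| ≤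
        (L * (c₂ * c₂)) * (‖b - βs‖ *
          (if ‖(q : (Pt d) × (Pt d)).1 - (q : (Pt d) × (Pt d)).2‖ ≤ r then
            en d n (q : (Pt d) × (Pt d)).1 (q : (Pt d) × (Pt d)).2 /
              (ρ βs (q : (Pt d) × (Pt d)).1 * ρ βs (q : (Pt d) × (Pt d)).2) else 0)) := by
      intro q
      set x := (q : (Pt d) × (Pt d)).1
      set y := (q : (Pt d) × (Pt d)).2
      by_cases hxy : ‖x - y‖ ≤ r
      · simp only [if_pos hxy]
        rw [div_eq_mul_inv, div_eq_mul_inv, ← mul_sub, abs_mul, abs_of_nonneg (hen n x y)]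
        obtain ⟨h1x, h2x, -, -⟩ := hRb βs hβsball x
        obtain ⟨h1y, h2y, -, -⟩ := hRb βs hβsball y
        have hpx := hρpos βs x
        have hpy := hρpos βs y
        have ht0 : 0 < ρ βs x * ρ βs y := mul_pos hpx hpy
        have hinv : 1 ≤ (c₂ * c₂) * (ρ βs x * ρ βs y)⁻¹ := by
          rw [← div_eq_mul_inv]
          rw [le_div_iff₀ ht0, one_mul]
          nlinarith
        have h1 := hlip x y b hb
        have step1 : en d n x y * |(ρ b x * ρ b y)⁻¹ - (ρ βs x * ρ βs y)⁻¹| ≤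
            en d n x y * (L * ‖b - βs‖) :=
          mul_le_mul_of_nonneg_left h1 (hen n x y)
        refine step1.trans ?_
        have hfac : 0 ≤ L * ‖b - βs‖ * en d n x y :=
          mul_nonneg (mul_nonneg hLpos.le (norm_nonneg _)) (hen n x y)
        calc en d n x y * (L * ‖b - βs‖)
            = (L * ‖b - βs‖ * en d n x y) * 1 := by ring
          _ ≤ (L * ‖b - βs‖ * en d n x y) * ((c₂ * c₂) * (ρ βs x * ρ βs y)⁻¹) :=
              mul_le_mul_of_nonneg_left hinv hfac
          _ = (L * (c₂ * c₂)) * (‖b - βs‖ * (en d n x y * (ρ βs x * ρ βs y)⁻¹)) := by ring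
      · simp [if_neg hxy]
    calc |(∑ q : ↥(pairs (P ω ∩ Wn d n)),
            if ‖(q : (Pt d) × (Pt d)).1 - (q : (Pt d) × (Pt d)).2‖ ≤ r then
              en d n (q : (Pt d) × (Pt d)).1 (q : (Pt d) × (Pt d)).2 /
                (ρ b (q : (Pt d) × (Pt d)).1 * ρ b (q : (Pt d) × (Pt d)).2) else 0) -
          (∑ q : ↥(pairs (P ω ∩ Wn d n)),
            if ‖(q : (Pt d) × (Pt d)).1 - (q : (Pt d) × (Pt d)).2‖ ≤ r then
              en d n (q : (Pt d) × (Pt d)).1 (q : (Pt d) × (Pt d)).2 /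
                (ρ βs (q : (Pt d) × (Pt d)).1 * ρ βs (q : (Pt d) × (Pt d)).2) else 0)|
        = |∑ q : ↥(pairs (P ω ∩ Wn d n)),
            ((if ‖(q : (Pt d) × (Pt d)).1 - (q : (Pt d) × (Pt d)).2‖ ≤ r then
              en d n (q : (Pt d) × (Pt d)).1 (q : (Pt d) × (Pt d)).2 /
                (ρ b (q : (Pt d) × (Pt d)).1 * ρ b (q : (Pt d) × (Pt d)).2) else 0) -
             (if ‖(q : (Pt d) × (Pt d)).1 - (q : (Pt d) × (Pt d)).2‖ ≤ r then
              en d n (q : (Pt d) × (Pt d)).1 (q : (Pt d) × (Pt d)).2 /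
                (ρ βs (q : (Pt d) × (Pt d)).1 * ρ βs (q : (Pt d) × (Pt d)).2) else 0))| := by
          rw [Finset.sum_sub_distrib]
      _ ≤ ∑ q : ↥(pairs (P ω ∩ Wn d n)),
            |(if ‖(q : (Pt d) × (Pt d)).1 - (q : (Pt d) × (Pt d)).2‖ ≤ r then
              en d n (q : (Pt d) × (Pt d)).1 (q : (Pt d) × (Pt d)).2 /
                (ρ b (q : (Pt d) × (Pt d)).1 * ρ b (q : (Pt d) × (Pt d)).2) else 0) -
             (if ‖(q : (Pt d) × (Pt d)).1 - (q : (Pt d) × (Pt d)).2‖ ≤ r then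
              en d n (q : (Pt d) × (Pt d)).1 (q : (Pt d) × (Pt d)).2 /
                (ρ βs (q : (Pt d) × (Pt d)).1 * ρ βs (q : (Pt d) × (Pt d)).2) else 0)| :=
          Finset.abs_sum_le_sum_abs _ _
      _ ≤ ∑ q : ↥(pairs (P ω ∩ Wn d n)),
            (L * (c₂ * c₂)) * (‖b - βs‖ *
              (if ‖(q : (Pt d) × (Pt d)).1 - (q : (Pt d) × (Pt d)).2‖ ≤ r then
                en d n (q : (Pt d) × (Pt d)).1 (q : (Pt d) × (Pt d)).2 /
                  (ρ βs (q : (Pt d) × (Pt d)).1 * ρ βs (q : (Pt d) × (Pt d)).2) else 0)) :=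
          Finset.sum_le_sum fun q _ => hper q
      _ = (L * (c₂ * c₂)) * (‖b - βs‖ *
            ∑ q : ↥(pairs (P ω ∩ Wn d n)),
              (if ‖(q : (Pt d) × (Pt d)).1 - (q : (Pt d) × (Pt d)).2‖ ≤ r then
                en d n (q : (Pt d) × (Pt d)).1 (q : (Pt d) × (Pt d)).2 /
                  (ρ βs (q : (Pt d) × (Pt d)).1 * ρ βs (q : (Pt d) × (Pt d)).2) else 0)) := by
          rw [← Finset.mul_sum]
          congr 1
          rw [← Finset.mul_sum]
  -- the limiting value
  set Kr : ℝ := ∫ h in Metric.ball (0 : Pt d) r, g h with hKrdef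
  rw [tendstoInMeasure_iff_dist]
  intro ε hε
  set C : ℝ := L * (c₂ * c₂) with hCdef
  have hCpos : 0 < C := by positivity
  set A : ℝ := |Kr| + 1 with hAdef
  have hApos : 0 < A := by positivity
  set δ : ℝ := min εR (ε / (2 * C * A)) with hδdef
  have hδpos : 0 < δ := lt_min hεR (by positivity)
  set ε' : ℝ := min (ε / 2) 1 with hε'def
  have hε'pos : 0 < ε' := lt_min (by positivity) one_pos
  have hsub : ∀ n : ℕ, {ω | ε ≤ dist (Khat P ρ n (βhat n ω) r ω) Kr} ⊆
      {ω | ε' ≤ dist (Khat P ρ n βs r ω) Kr} ∪ {ω | δ ≤ dist (βhat n ω) βs} := by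
    intro n ω hω
    simp only [Set.mem_setOf_eq] at hω
    by_contra hcon
    simp only [Set.mem_union, Set.mem_setOf_eq, not_or, not_le] at hcon
    obtain ⟨h1, h2⟩ := hcon
    have hbn : ‖βhat n ω - βs‖ ≤ εR := by
      rw [← dist_eq_norm]
      exact h2.le.trans (min_le_left _ _)
    have hm := hmaster n ω (βhat n ω) hbn
    have hnn := hKnn n ω
    have hKA : Khat P ρ n βs r ω ≤ A := by
      have hlt : |Khat P ρ n βs r ω - Kr| < 1 := by
        rw [← Real.dist_eq]
        exact lt_of_lt_of_le h1 (min_le_right _ _)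
      have habs := abs_sub_abs_le_abs_sub (Khat P ρ n βs r ω) Kr
      have := le_abs_self (Khat P ρ n βs r ω)
      rw [hAdef]
      have := abs_sub (Khat P ρ n βs r ω) Kr
      calc Khat P ρ n βs r ω ≤ |Khat P ρ n βs r ω| := le_abs_self _
        _ ≤ |Khat P ρ n βs r ω - Kr| + |Kr| := by
            have := abs_sub_abs_le_abs_sub (Khat P ρ n βs r ω) Kr
            linarith [abs_nonneg Kr]
        _ ≤ |Kr| + 1 := by linarith
    have hd2 : ‖βhat n ω - βs‖ ≤ δ := by
      rw [← dist_eq_norm]; exact h2.le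
    have hdiff : |Khat P ρ n (βhat n ω) r ω - Khat P ρ n βs r ω| ≤ ε / 2 := by
      have step : C * (‖βhat n ω - βs‖ * Khat P ρ n βs r ω) ≤ C * (δ * A) := by
        refine mul_le_mul_of_nonneg_left ?_ hCpos.le
        exact mul_le_mul hd2 hKA hnn hδpos.le
      have hCd : C * (δ * A) ≤ ε / 2 := by
        have hle : δ ≤ ε / (2 * C * A) := min_le_right _ _
        have heq : C * (ε / (2 * C * A) * A) = ε / 2 := by
          field_simp
        calc C * (δ * A) ≤ C * (ε / (2 * C * A) * A) := by
              refine mul_le_mul_of_nonneg_left ?_ hCpos.le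
              exact mul_le_mul_of_nonneg_right hle hApos.le
          _ = ε / 2 := heq
      exact hm.trans (step.trans hCd)
    have hd1 : dist (Khat P ρ n βs r ω) Kr < ε / 2 :=
      lt_of_lt_of_le h1 (min_le_left _ _)
    have hfinal : dist (Khat P ρ n (βhat n ω) r ω) Kr < ε := by
      have htri := dist_triangle (Khat P ρ n (βhat n ω) r ω) (Khat P ρ n βs r ω) Kr
      have hdd : dist (Khat P ρ n (βhat n ω) r ω) (Khat P ρ n βs r ω) ≤ ε / 2 := by
        rw [Real.dist_eq]; exact hdiff
      linarith
    exact absurd hω (not_le.mpr hfinal)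
  have h1 := (tendstoInMeasure_iff_dist.1 (hKcons r hr)) ε' hε'pos
  have h2 := (tendstoInMeasure_iff_dist.1 hβcons) δ hδpos
  have hadd : Tendsto (fun n : ℕ =>
      μ {ω | ε' ≤ dist (Khat P ρ n βs r ω) Kr} + μ {ω | δ ≤ dist (βhat n ω) βs})
      atTop (𝓝 0) := by
    have := h1.add h2
    simpa using this
  refine tendsto_of_tendsto_of_tendsto_of_le_of_le tendsto_const_nhds hadd
    (fun n => zero_le') (fun n => ?_)
  exact (measure_mono (hsub n)).trans (measure_union_le _ _)
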